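/- Let $(\Omega, \mathcal{F}, \mu)$ be a probability space, $m \in \mathbb{N}$, and $\rho_1, \dots, \rho_m \in \mathbb{R}$. Let $X_0, X_1, \dots, X_m$ and $\eta_1, \dots, \eta_m$ be square-integrable real random variables such that: $\mathbb{E}[X_0] = 0$ and $\mathbb{E}[X_0^2] = 1$; for each $i \in \{1, \dots, m\}$, $X_i = \rho_i X_{i-1} + \eta_i$, where $\eta_i$ is independent of the pair $(X_0, X_{i-1})$, $\mathbb{E}[\eta_i] = 0$, and $\mathbb{E}[\eta_i^2] = 1 - \rho_i^2$. Then $\mathbb{E}\left[(X_m - X_0)^2\right] = 2\left(1 - \prod_{i=1}^m \rho_i\right)$. -/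

import Mathlib

open MeasureTheory ProbabilityTheory

lemma memL2_integrable_mul {Ω : Type*} [MeasurableSpace Ω] {μ : Measure Ω} [IsFiniteMeasure μ]
    {f g : Ω → ℝ} (hf : MemLp f 2 μ) (hg : MemLp g 2 μ) :
    Integrable (fun ω => f ω * g ω) μ := by
  have h : MemLp (f • g) 1 μ :=
    hg.smul hf
  exact h.integrable le_rfl

/-- Per-coordinate mean-square identity of Proposition 1: for the autoregressive
recursion `X_i = ρ_i X_{i-1} + η_i` with `η_i` independent of `(X_0, X_{i-1})`, zero mean and
variance `1 - ρ_i²`, started from a standardized `X_0`, one has `E[(X_m - X_0)²] = 2(1 - ∏_{i=1}^m ρ_i)`. -/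
theorem ar_process_mean_square_distance
    {Ω : Type*} [MeasurableSpace Ω] (μ : Measure Ω) [IsProbabilityMeasure μ]
    (m : ℕ) (ρ : ℕ → ℝ) (X : ℕ → Ω → ℝ) (η : ℕ → Ω → ℝ)
    (hX2 : ∀ i ≤ m, MemLp (X i) 2 μ)
    (hη2 : ∀ i ∈ Finset.Icc 1 m, MemLp (η i) 2 μ)
    (hX0mean : ∫ ω, X 0 ω ∂μ = 0)
    (hX0var : ∫ ω, (X 0 ω) ^ 2 ∂μ = 1)
    (hrec : ∀ i ∈ Finset.Icc 1 m, X i = fun ω => ρ i * X (i - 1) ω + η i ω)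
    (hindep : ∀ i ∈ Finset.Icc 1 m,
      IndepFun (η i) (fun ω => (X 0 ω, X (i - 1) ω)) μ)
    (hηmean : ∀ i ∈ Finset.Icc 1 m, ∫ ω, η i ω ∂μ = 0)
    (hηvar : ∀ i ∈ Finset.Icc 1 m, ∫ ω, (η i ω) ^ 2 ∂μ = 1 - (ρ i) ^ 2) :
    ∫ ω, (X m ω - X 0 ω) ^ 2 ∂μ = 2 * (1 - ∏ i ∈ Finset.Icc 1 m, ρ i) := by
  -- main induction: E[X_k²] = 1 and E[X_k X_0] = ∏_{i=1}^k ρ_i for all k ≤ m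
  have key : ∀ k, k ≤ m →
      (∫ ω, (X k ω) ^ 2 ∂μ = 1) ∧
      (∫ ω, X k ω * X 0 ω ∂μ = ∏ i ∈ Finset.Icc 1 k, ρ i) := by
    intro k
    induction k with
    | zero =>
      intro _
      refine ⟨hX0var, ?_⟩
      simp only [Finset.Icc_self, Finset.Icc_eq_empty_of_lt (by norm_num : (1:ℕ) > 0)]
      simp [← pow_two, hX0var]
    | succ k ih =>
      intro hk
      have hk' : k ≤ m := Nat.le_of_succ_le hk
      obtain ⟨ihsq, ihcov⟩ := ih hk'
      have hmem : k + 1 ∈ Finset.Icc 1 m := Finset.mem_Icc.mpr ⟨Nat.succ_le_succ (Nat.zero_le _), hk⟩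
      have hXeq : X (k + 1) = fun ω => ρ (k + 1) * X k ω + η (k + 1) ω := by
        simpa using hrec (k + 1) hmem
      have hη : MemLp (η (k + 1)) 2 μ := hη2 _ hmem
      have hXk : MemLp (X k) 2 μ := hX2 k hk'
      have hX0 : MemLp (X 0) 2 μ := hX2 0 (Nat.zero_le _)
      -- independence of η (k+1) with X k and with X 0
      have hind := hindep (k + 1) hmem
      have hindXk : IndepFun (η (k + 1)) (X k) μ := by
        have := hind.comp measurable_id measurable_snd
        exact this
      have hindX0 : IndepFun (η (k + 1)) (X 0) μ := by
        have := hind.comp measurable_id measurable_fst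
        exact this
      -- integrabilities
      have hiXksq : Integrable (fun ω => (X k ω) ^ 2) μ := hXk.integrable_sq
      have hiηsq : Integrable (fun ω => (η (k + 1) ω) ^ 2) μ := hη.integrable_sq
      have hiηXk : Integrable (fun ω => η (k + 1) ω * X k ω) μ := memL2_integrable_mul hη hXk
      have hiηX0 : Integrable (fun ω => η (k + 1) ω * X 0 ω) μ := memL2_integrable_mul hη hX0
      have hiXkX0 : Integrable (fun ω => X k ω * X 0 ω) μ := memL2_integrable_mul hXk hX0
      -- cross expectations vanish
      have hcross : ∫ ω, η (k + 1) ω * X k ω ∂μ = 0 := by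
        have h := hindXk.integral_mul_eq_mul_integral hη.aestronglyMeasurable hXk.aestronglyMeasurable
        rw [hηmean (k + 1) hmem, zero_mul] at h
        exact h
      have hcross0 : ∫ ω, η (k + 1) ω * X 0 ω ∂μ = 0 := by
        have h := hindX0.integral_mul_eq_mul_integral hη.aestronglyMeasurable hX0.aestronglyMeasurable
        rw [hηmean (k + 1) hmem, zero_mul] at h
        exact h
      constructor
      · -- second moment
        have expand : ∀ ω, (X (k + 1) ω) ^ 2 =
            ρ (k + 1) ^ 2 * (X k ω) ^ 2 + (2 * ρ (k + 1)) * (η (k + 1) ω * X k ω)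
              + (η (k + 1) ω) ^ 2 := by
          intro ω; rw [hXeq]; ring
        calc ∫ ω, (X (k + 1) ω) ^ 2 ∂μ
            = ∫ ω, (ρ (k + 1) ^ 2 * (X k ω) ^ 2 + (2 * ρ (k + 1)) * (η (k + 1) ω * X k ω)
                + (η (k + 1) ω) ^ 2) ∂μ := by
              exact integral_congr_ae (Filter.Eventually.of_forall expand)
          _ = ρ (k + 1) ^ 2 * ∫ ω, (X k ω) ^ 2 ∂μ
                + (2 * ρ (k + 1)) * ∫ ω, η (k + 1) ω * X k ω ∂μ
                + ∫ ω, (η (k + 1) ω) ^ 2 ∂μ := by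
              have h12 : Integrable (fun ω => ρ (k + 1) ^ 2 * (X k ω) ^ 2
                  + (2 * ρ (k + 1)) * (η (k + 1) ω * X k ω)) μ :=
                (hiXksq.const_mul _).add (hiηXk.const_mul _)
              rw [integral_add h12 hiηsq,
                integral_add (hiXksq.const_mul _) (hiηXk.const_mul _),
                integral_const_mul, integral_const_mul]
          _ = 1 := by
              rw [ihsq, hcross, hηvar (k + 1) hmem]; ring
      · -- covariance with X 0
        have expand : ∀ ω, X (k + 1) ω * X 0 ω =
            ρ (k + 1) * (X k ω * X 0 ω) + η (k + 1) ω * X 0 ω := by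
          intro ω; rw [hXeq]; ring
        calc ∫ ω, X (k + 1) ω * X 0 ω ∂μ
            = ∫ ω, (ρ (k + 1) * (X k ω * X 0 ω) + η (k + 1) ω * X 0 ω) ∂μ :=
              integral_congr_ae (Filter.Eventually.of_forall expand)
          _ = ρ (k + 1) * ∫ ω, X k ω * X 0 ω ∂μ + ∫ ω, η (k + 1) ω * X 0 ω ∂μ := by
              rw [integral_add (hiXkX0.const_mul _) hiηX0, integral_const_mul]
          _ = ∏ i ∈ Finset.Icc 1 (k + 1), ρ i := by
              rw [ihcov, hcross0, add_zero,
                Finset.prod_Icc_succ_top (Nat.succ_le_succ (Nat.zero_le k))]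
              ring
  obtain ⟨hsq, hcov⟩ := key m le_rfl
  have hXm : MemLp (X m) 2 μ := hX2 m le_rfl
  have hX0 : MemLp (X 0) 2 μ := hX2 0 (Nat.zero_le _)
  have hiXmsq : Integrable (fun ω => (X m ω) ^ 2) μ := hXm.integrable_sq
  have hiX0sq : Integrable (fun ω => (X 0 ω) ^ 2) μ := hX0.integrable_sq
  have hiXmX0 : Integrable (fun ω => X m ω * X 0 ω) μ := memL2_integrable_mul hXm hX0
  have expand : ∀ ω, (X m ω - X 0 ω) ^ 2 =
      (X m ω) ^ 2 + (-2) * (X m ω * X 0 ω) + (X 0 ω) ^ 2 := by intro ω; ring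
  calc ∫ ω, (X m ω - X 0 ω) ^ 2 ∂μ
      = ∫ ω, ((X m ω) ^ 2 + (-2) * (X m ω * X 0 ω) + (X 0 ω) ^ 2) ∂μ :=
        integral_congr_ae (Filter.Eventually.of_forall expand)
    _ = ∫ ω, (X m ω) ^ 2 ∂μ + (-2) * ∫ ω, X m ω * X 0 ω ∂μ + ∫ ω, (X 0 ω) ^ 2 ∂μ := by
        have h12 : Integrable (fun ω => (X m ω) ^ 2 + (-2) * (X m ω * X 0 ω)) μ :=
          hiXmsq.add (hiXmX0.const_mul _)
        rw [integral_add h12 hiX0sq,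
          integral_add hiXmsq (hiXmX0.const_mul _), integral_const_mul]
    _ = 2 * (1 - ∏ i ∈ Finset.Icc 1 m, ρ i) := by
        rw [hsq, hcov, hX0var]; ring
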